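/- arXiv:1608.00295 — 3 statements merged into one kernel-verified Lean document; each statement's English description precedes it below -/
import Mathlib

section
/- For λ ≥ 1 and z ≥ 0, the function λ ↦ −z√λ + λ(e^{z/√λ} − 1) is non-increasing in λ; equivalently, its supremum over λ ≥ 1 equals e^z − 1 − z. -/
open Real Set

lemma key_ineq (t : ℝ) (ht : 0 ≤ t) : 2 * (Real.exp t - 1) ≤ t * (Real.exp t + 1) := by
  set h : ℝ → ℝ := fun t => t * (Real.exp t + 1) - 2 * (Real.exp t - 1) with hh
  have hd : ∀ x : ℝ, HasDerivAt h (1 * (Real.exp x + 1) + x * Real.exp x - 2 * Real.exp x) x := by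
    intro x
    exact ((hasDerivAt_id x).mul ((Real.hasDerivAt_exp x).add_const 1)).sub
      (((Real.hasDerivAt_exp x).sub_const 1).const_mul 2)
  have hmono : MonotoneOn h (Ici 0) := by
    apply monotoneOn_of_deriv_nonneg (convex_Ici 0)
    · exact fun x _ => (hd x).continuousAt.continuousWithinAt
    · exact fun x _ => (hd x).differentiableAt.differentiableWithinAt
    · intro x hx
      rw [(hd x).deriv]
      have hx0 : 0 ≤ x := le_of_lt (by simpa using hx)
      have h1 : (1 - x) ≤ Real.exp (-x) := by
        have := Real.add_one_le_exp (-x); linarith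
      have h2 : (1 - x) * Real.exp x ≤ 1 := by
        have hp : (0:ℝ) < Real.exp x := Real.exp_pos x
        calc (1 - x) * Real.exp x ≤ Real.exp (-x) * Real.exp x :=
              mul_le_mul_of_nonneg_right h1 hp.le
          _ = 1 := by rw [← Real.exp_add]; simp
      nlinarith
  have h0 : h 0 = 0 := by simp [hh]
  have := hmono (self_mem_Ici) (mem_Ici.mpr ht) ht
  rw [h0] at this
  simp only [hh] at this
  linarith

/-- For `z ≥ 0`, the function `λ ↦ −z√λ + λ(e^{z/√λ} − 1)` is non-increasing on `[1,∞)`,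
and its supremum over `λ ≥ 1` equals `e^z − 1 − z`. -/
theorem poisson_log_mgf_antitone_and_sup (z : ℝ) (hz : 0 ≤ z) :
    AntitoneOn (fun l : ℝ => -z * Real.sqrt l + l * (Real.exp (z / Real.sqrt l) - 1))
        (Ici 1)
      ∧ (⨆ l : Ici (1 : ℝ),
          (-z * Real.sqrt l + (l : ℝ) * (Real.exp (z / Real.sqrt l) - 1)))
        = Real.exp z - 1 - z := by
  set F : ℝ → ℝ := fun l => -z * Real.sqrt l + l * (Real.exp (z / Real.sqrt l) - 1) with hF
  -- derivative at any l > 0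
  have hderiv : ∀ l : ℝ, 0 < l → HasDerivAt F
      (-z * (1 / (2 * Real.sqrt l)) +
        (1 * (Real.exp (z / Real.sqrt l) - 1) +
          l * (Real.exp (z / Real.sqrt l) * (z * (-(1 / (2 * Real.sqrt l)) / Real.sqrt l ^ 2))))) l := by
    intro l hl
    have hs0 : Real.sqrt l ≠ 0 := by positivity
    have hs : HasDerivAt Real.sqrt (1 / (2 * Real.sqrt l)) l := Real.hasDerivAt_sqrt hl.ne'
    have h1 : HasDerivAt (fun l => -z * Real.sqrt l) (-z * (1 / (2 * Real.sqrt l))) l :=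
      hs.const_mul (-z)
    have h2 : HasDerivAt (fun l => z / Real.sqrt l)
        (z * (-(1 / (2 * Real.sqrt l)) / Real.sqrt l ^ 2)) l := by
      simpa [div_eq_mul_inv] using (hs.inv hs0).const_mul z
    have h3 := (h2.exp.sub_const 1)
    have h4 := (hasDerivAt_id l).mul h3
    exact h1.add h4
  -- derivative nonpositive for l ≥ 1
  have hnonpos : ∀ l : ℝ, 1 ≤ l →
      (-z * (1 / (2 * Real.sqrt l)) +
        (1 * (Real.exp (z / Real.sqrt l) - 1) +
          l * (Real.exp (z / Real.sqrt l) * (z * (-(1 / (2 * Real.sqrt l)) / Real.sqrt l ^ 2))))) ≤ 0 := by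
    intro l hl
    have hl0 : (0:ℝ) < l := lt_of_lt_of_le one_pos hl
    have hs : 0 < Real.sqrt l := Real.sqrt_pos.mpr hl0
    have hsq : Real.sqrt l ^ 2 = l := Real.sq_sqrt hl0.le
    set t := z / Real.sqrt l with htdef
    have ht : 0 ≤ t := div_nonneg hz hs.le
    have hkey := key_ineq t ht
    have htz : t * Real.sqrt l = z := div_mul_cancel₀ z hs.ne'
    rw [hsq]
    have hexp : 0 < Real.exp t := Real.exp_pos t
    -- rewrite everything in terms of t and s := sqrt l
    have : -z * (1 / (2 * Real.sqrt l)) = -(t/2) := by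
      rw [← htz]; field_simp
    rw [this]
    have : l * (Real.exp t * (z * (-(1 / (2 * Real.sqrt l)) / l))) = -(t/2) * Real.exp t := by
      rw [← htz]; field_simp
    rw [this]
    nlinarith [hkey]
  have hcont : ContinuousOn F (Ici 1) := by
    intro l hl
    exact (hderiv l (lt_of_lt_of_le one_pos hl)).continuousAt.continuousWithinAt
  have hant : AntitoneOn F (Ici 1) := by
    apply antitoneOn_of_deriv_nonpos (convex_Ici 1) hcont
    · intro l hl
      rw [interior_Ici] at hl
      exact (hderiv l (lt_trans one_pos hl)).differentiableAt.differentiableWithinAt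
    · intro l hl
      rw [interior_Ici] at hl
      rw [(hderiv l (lt_trans one_pos hl)).deriv]
      exact hnonpos l hl.le
  have hF1 : F 1 = Real.exp z - 1 - z := by
    rw [hF]
    simp only [Real.sqrt_one, div_one]
    ring
  refine ⟨hant, ?_⟩
  have hub : ∀ l : Ici (1:ℝ), F l ≤ F 1 := fun ⟨l, hl⟩ => hant self_mem_Ici hl hl
  have hbdd : BddAbove (range fun l : Ici (1:ℝ) => F l) := ⟨F 1, by rintro x ⟨l, rfl⟩; exact hub l⟩
  have heq : (⨆ l : Ici (1:ℝ), F l) = F 1 :=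
    le_antisymm (ciSup_le hub) (le_ciSup hbdd ⟨1, self_mem_Ici⟩)
  exact heq.trans hF1
end

section
/- Under the hypotheses above, sup_{x ∈ I} |E[f(S_n)] − f(x)| ≤ ∫_0^∞ ω_σ[f](z/√n) |dQ_ζ(z)|, where Q_ζ(u) = sup_m P( m^{-1/2} |∑_{i=1}^m ζ(i)| > u ) is the absolute tail function of ζ = (ξ_1 − x)/σ(x), and the integral is the Lebesgue–Stieltjes integral against the decreasing function Q_ζ. -/
open Set MeasureTheory ProbabilityTheory

/-- The clamp of `y` onto `[a,b]`. -/
noncomputable def dtClamp (a b y : ℝ) : ℝ := max a (min b y)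

/-- The Ditzian–Totik modulus of continuity. -/
noncomputable def dtMod (f σ : ℝ → ℝ) (a b δ : ℝ) : ℝ :=
  sSup ((fun p : ℝ × ℝ => |f (dtClamp a b (p.2 + p.1 * σ p.2)) - f p.2|) ''
    {p : ℝ × ℝ | |p.1| ≤ δ ∧ p.2 ∈ Icc a b})

open Filter Topology Function

section dt

variable {f σ : ℝ → ℝ} {a b M : ℝ}

lemma dtClamp_mem (hab : a ≤ b) (y : ℝ) : dtClamp a b y ∈ Icc a b :=
  ⟨le_max_left _ _, max_le hab (min_le_left _ _)⟩

lemma dtClamp_of_mem {y : ℝ} (hy : y ∈ Icc a b) : dtClamp a b y = y := by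
  have := hy.1; have := hy.2
  rw [dtClamp, min_eq_right hy.2, max_eq_right hy.1]

lemma dtSet_bddAbove (hab : a ≤ b) (hfM : ∀ y ∈ Icc a b, |f y| ≤ M) (δ : ℝ) :
    BddAbove ((fun p : ℝ × ℝ => |f (dtClamp a b (p.2 + p.1 * σ p.2)) - f p.2|) ''
      {p : ℝ × ℝ | |p.1| ≤ δ ∧ p.2 ∈ Icc a b}) := by
  refine ⟨2 * M, ?_⟩
  rintro v ⟨p, hp, rfl⟩
  calc |f (dtClamp a b (p.2 + p.1 * σ p.2)) - f p.2|
      ≤ |f (dtClamp a b (p.2 + p.1 * σ p.2))| + |f p.2| := abs_sub _ _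
    _ ≤ M + M := add_le_add (hfM _ (dtClamp_mem hab _)) (hfM _ hp.2)
    _ = 2 * M := by ring

lemma dtMod_nonneg (hab : a ≤ b) (hfM : ∀ y ∈ Icc a b, |f y| ≤ M) {δ : ℝ} (hδ : 0 ≤ δ) :
    0 ≤ dtMod f σ a b δ := by
  have hmem := Set.mem_image_of_mem
    (fun p : ℝ × ℝ => |f (dtClamp a b (p.2 + p.1 * σ p.2)) - f p.2|)
    (show ((0 : ℝ), a) ∈ {p : ℝ × ℝ | |p.1| ≤ δ ∧ p.2 ∈ Icc a b} by
      simp [abs_nonneg, hδ, hab])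
  exact le_trans (abs_nonneg _) (le_csSup (dtSet_bddAbove hab hfM δ) hmem)

lemma dtMod_le (hab : a ≤ b) (hfM : ∀ y ∈ Icc a b, |f y| ≤ M) (δ : ℝ) :
    dtMod f σ a b δ ≤ 2 * M := by
  rcases eq_or_ne ((fun p : ℝ × ℝ => |f (dtClamp a b (p.2 + p.1 * σ p.2)) - f p.2|) ''
      {p : ℝ × ℝ | |p.1| ≤ δ ∧ p.2 ∈ Icc a b}) ∅ with h | h
  · rw [dtMod, h, Real.sSup_empty]
    have : 0 ≤ M := le_trans (abs_nonneg _) (hfM a ⟨le_rfl, hab⟩)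
    linarith
  · refine csSup_le (Set.nonempty_iff_ne_empty.2 h) ?_
    rintro v ⟨p, hp, rfl⟩
    calc |f (dtClamp a b (p.2 + p.1 * σ p.2)) - f p.2|
        ≤ |f (dtClamp a b (p.2 + p.1 * σ p.2))| + |f p.2| := abs_sub _ _
      _ ≤ M + M := add_le_add (hfM _ (dtClamp_mem hab _)) (hfM _ hp.2)
      _ = 2 * M := by ring

lemma dtMod_mono (hab : a ≤ b) (hfM : ∀ y ∈ Icc a b, |f y| ≤ M) :
    Monotone (dtMod f σ a b) := by
  intro δ δ' hδ
  rcases lt_or_ge δ 0 with h | h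
  · have : {p : ℝ × ℝ | |p.1| ≤ δ ∧ p.2 ∈ Icc a b} = ∅ := by
      ext p; simp only [Set.mem_setOf_eq, Set.mem_empty_iff_false, iff_false, not_and]
      intro h1; exact absurd (le_trans (abs_nonneg _) h1) (not_le.2 h)
    rw [dtMod, this, Set.image_empty, Real.sSup_empty]
    rcases lt_or_ge δ' 0 with h' | h'
    · have : {p : ℝ × ℝ | |p.1| ≤ δ' ∧ p.2 ∈ Icc a b} = ∅ := by
        ext p; simp only [Set.mem_setOf_eq, Set.mem_empty_iff_false, iff_false, not_and]
        intro h1; exact absurd (le_trans (abs_nonneg _) h1) (not_le.2 h')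
      rw [dtMod, this, Set.image_empty, Real.sSup_empty]
    · exact dtMod_nonneg hab hfM h'
  · refine csSup_le_csSup (dtSet_bddAbove hab hfM δ') ?_ ?_
    · exact ⟨_, Set.mem_image_of_mem _ (show ((0 : ℝ), a) ∈ _ by simp [h, hab])⟩
    · exact Set.image_mono (fun p hp => ⟨le_trans hp.1 hδ, hp.2⟩)

lemma dtMod_zero (hab : a ≤ b) (hfM : ∀ y ∈ Icc a b, |f y| ≤ M) :
    dtMod f σ a b 0 = 0 := by
  refine le_antisymm ?_ (dtMod_nonneg hab hfM le_rfl)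
  refine csSup_le ⟨_, Set.mem_image_of_mem _ (show ((0 : ℝ), a) ∈ _ by simp [hab])⟩ ?_
  rintro v ⟨p, hp, rfl⟩
  have h1 : p.1 = 0 := abs_nonneg p.1 |>.antisymm' hp.1 |> abs_eq_zero.mp
  simp only
  rw [h1, zero_mul, add_zero, dtClamp_of_mem hp.2, sub_self, abs_zero]

lemma le_dtMod (hab : a ≤ b) (hfM : ∀ y ∈ Icc a b, |f y| ≤ M)
    {x t δ : ℝ} (hx : x ∈ Icc a b) (ht : |t| ≤ δ) (hy : x + t * σ x ∈ Icc a b) :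
    |f (x + t * σ x) - f x| ≤ dtMod f σ a b δ := by
  have := le_csSup (dtSet_bddAbove hab hfM δ)
    (Set.mem_image_of_mem (fun p : ℝ × ℝ => |f (dtClamp a b (p.2 + p.1 * σ p.2)) - f p.2|)
      (show ((t, x) : ℝ × ℝ) ∈ {p : ℝ × ℝ | |p.1| ≤ δ ∧ p.2 ∈ Icc a b} from ⟨ht, hx⟩))
  simp only at this
  rwa [dtClamp_of_mem hy] at this

end dt


section indep

variable {Ω : Type*} [MeasurableSpace Ω] {μ : Measure Ω} [IsProbabilityMeasure μ]

/-- Restriction of an ℕ-indexed independent family to `Fin k`. -/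
lemma iIndepFun_fin_of_nat {g : ℕ → Ω → ℝ} (k : ℕ)
    (h : iIndepFun g μ) :
    iIndepFun (fun i : Fin k => g i) μ := by
  rw [iIndepFun_iff_measure_inter_preimage_eq_mul] at h ⊢
  intro S sets hsets
  classical
  set sets' : ℕ → Set ℝ := fun j => if hj : j < k then sets ⟨j, hj⟩ else Set.univ with hsets'
  have key := h (S.image Fin.val) (sets := sets') (fun j hj => by
    rcases Finset.mem_image.1 hj with ⟨i, hi, rfl⟩
    simp only [hsets', i.isLt, dif_pos]
    exact hsets i hi)
  have h1 : (⋂ j ∈ S.image Fin.val, g j ⁻¹' sets' j) = ⋂ i ∈ S, g i ⁻¹' sets i := by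
    ext ω
    simp only [Set.mem_iInter, Finset.mem_image]
    constructor
    · intro hω i hi
      have := hω i.val ⟨i, hi, rfl⟩
      simpa only [hsets', i.isLt, dif_pos] using this
    · rintro hω j ⟨i, hi, rfl⟩
      simpa only [hsets', i.isLt, dif_pos] using hω i hi
  have h2 : ∏ j ∈ S.image Fin.val, μ (g j ⁻¹' sets' j) = ∏ i ∈ S, μ (g i ⁻¹' sets i) := by
    rw [Finset.prod_image (fun i _ j _ hij => Fin.val_injective hij)]
    refine Finset.prod_congr rfl (fun i hi => by simp only [hsets', i.isLt, dif_pos])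
  rw [h1, h2] at key
  exact key

/-- The joint law of a finite independent family is the product of the marginals. -/
lemma map_joint_eq_pi {k : ℕ} {X : Fin k → Ω → ℝ} (hX : ∀ i, Measurable (X i))
    (h : iIndepFun X μ) :
    μ.map (fun ω i => X i ω) = Measure.pi (fun i => μ.map (X i)) := by
  haveI : ∀ i, IsProbabilityMeasure (μ.map (X i)) :=
    fun i => Measure.isProbabilityMeasure_map (hX i).aemeasurable
  refine (Measure.pi_eq fun s hs => ?_).symm
  rw [Measure.map_apply (measurable_pi_lambda _ hX) (MeasurableSet.univ_pi hs)]
  have hpre : (fun ω i => X i ω) ⁻¹' Set.pi univ s = ⋂ i ∈ Finset.univ, X i ⁻¹' s i := by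
    ext ω; simp [Set.mem_pi]
  rw [hpre, h.measure_inter_preimage_eq_mul Finset.univ (fun i _ => hs i)]
  exact Finset.prod_congr rfl fun i _ =>
    (Measure.map_apply (hX i) (hs i)).symm

/-- Sums of two iid families with the same marginals have the same law. -/
lemma map_sum_eq_map_sum {k : ℕ} {X Y : Fin k → Ω → ℝ}
    (hX : ∀ i, Measurable (X i)) (hY : ∀ i, Measurable (Y i))
    (hXi : iIndepFun X μ)
    (hYi : iIndepFun Y μ)
    (hid : ∀ i, μ.map (X i) = μ.map (Y i)) :
    μ.map (fun ω => ∑ i, X i ω) = μ.map (fun ω => ∑ i, Y i ω) := by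
  have hsum : Measurable (fun v : Fin k → ℝ => ∑ i, v i) := by
    exact Finset.measurable_sum _ (fun i _ => measurable_pi_apply i)
  have hX' : μ.map (fun ω => ∑ i, X i ω)
      = (μ.map (fun ω i => X i ω)).map (fun v : Fin k → ℝ => ∑ i, v i) := by
    rw [Measure.map_map hsum (measurable_pi_lambda _ hX)]
    rfl
  have hY' : μ.map (fun ω => ∑ i, Y i ω)
      = (μ.map (fun ω i => Y i ω)).map (fun v : Fin k → ℝ => ∑ i, v i) := by
    rw [Measure.map_map hsum (measurable_pi_lambda _ hY)]
    rfl
  rw [hX', hY', map_joint_eq_pi hX hXi, map_joint_eq_pi hY hYi]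
  congr 1
  exact congrArg _ (funext hid)

end indep


section moments

variable {Ω : Type*} [MeasurableSpace Ω] {μ : Measure Ω} [IsProbabilityMeasure μ]

lemma ae_bound_of_map_eq {ζ g : Ω → ℝ} {C : ℝ} (hζ : Measurable ζ) (hg : Measurable g)
    (hC : ∀ ω, |ζ ω| ≤ C) (hmap : μ.map g = μ.map ζ) :
    ∀ᵐ ω ∂μ, |g ω| ≤ C := by
  have hset : MeasurableSet {y : ℝ | C < |y|} :=
    measurableSet_lt measurable_const measurable_abs
  refine (ae_iff).2 ?_
  have hpre : {a | ¬ |g a| ≤ C} = g ⁻¹' {y : ℝ | C < |y|} := by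
    ext ω; simp [not_le]
  rw [hpre, ← Measure.map_apply hg hset, hmap, Measure.map_apply hζ hset]
  have hempty : ζ ⁻¹' {y : ℝ | C < |y|} = ∅ := by
    ext ω
    simp only [Set.mem_preimage, Set.mem_setOf_eq, Set.mem_empty_iff_false, iff_false, not_lt]
    exact hC ω
  simp [hempty]

lemma integral_comp_of_map_eq {ζ g : Ω → ℝ} (hζ : Measurable ζ) (hg : Measurable g)
    (hmap : μ.map g = μ.map ζ) {F : ℝ → ℝ} (hF : Measurable F) :
    ∫ ω, F (g ω) ∂μ = ∫ ω, F (ζ ω) ∂μ := by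
  rw [← integral_map hg.aemeasurable hF.aestronglyMeasurable, hmap,
    integral_map hζ.aemeasurable hF.aestronglyMeasurable]

end moments

section cheb

variable {Ω : Type*} [MeasurableSpace Ω] {μ : Measure Ω} [IsProbabilityMeasure μ]

/-- Chebyshev bound for normalized sums of iid mean-zero variance-one variables. -/
lemma cheb_sum {g : ℕ → Ω → ℝ}
    (hL2 : ∀ i, MemLp (g i) 2 μ)
    (hind : iIndepFun g μ)
    (hmean : ∀ i, ∫ ω, g i ω ∂μ = 0)
    (hvar : ∀ i, variance (g i) μ = 1)
    {u : ℝ} (hu : 0 < u) (m : ℕ) :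
    μ {ω | |∑ i ∈ Finset.range (m + 1), g i ω| / Real.sqrt (m + 1) > u}
      ≤ ENNReal.ofReal (1 / u ^ 2) := by
  set T : Ω → ℝ := fun ω => ∑ i ∈ Finset.range (m + 1), g i ω with hT
  have hTL2 : MemLp T 2 μ := by
    have h := memLp_finset_sum' (Finset.range (m + 1)) (fun i _ => hL2 i)
    have : (∑ i ∈ Finset.range (m + 1), g i) = T := by
      funext ω; simp [hT]
    rwa [this] at h
  have hmsqrt : (0 : ℝ) < Real.sqrt (m + 1) := by
    positivity
  have hTmean : ∫ ω, T ω ∂μ = 0 := by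
    rw [hT, integral_finset_sum _ (fun i _ => (hL2 i).integrable one_le_two)]
    simp [hmean]
  have hTvar : variance T μ = (m : ℝ) + 1 := by
    have hsum : T = ∑ i ∈ Finset.range (m + 1), g i := by
      funext ω; simp [hT]
    rw [hsum, IndepFun.variance_sum (fun i _ => hL2 i)
      (fun i _ j _ hij => hind.indepFun hij)]
    simp [hvar]
  have hc : (0 : ℝ) < u * Real.sqrt (m + 1) := mul_pos hu hmsqrt
  have key := meas_ge_le_variance_div_sq hTL2 hc
  have hsub : {ω | |T ω| / Real.sqrt (m + 1) > u} ⊆ {ω | u * Real.sqrt (m + 1) ≤ |T ω - μ[T]|} := by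
    intro ω hω
    simp only [Set.mem_setOf_eq] at hω ⊢
    rw [hTmean, sub_zero]
    rw [gt_iff_lt, lt_div_iff₀ hmsqrt] at hω
    exact le_of_lt hω
  refine le_trans (measure_mono hsub) (le_trans key ?_)
  have : variance T μ / (u * Real.sqrt (m + 1)) ^ 2 = 1 / u ^ 2 := by
    rw [hTvar, mul_pow, Real.sq_sqrt (by positivity : (0:ℝ) ≤ (m : ℝ) + 1)]
    field_simp
  rw [this]

/-- Positivity of the upper tail for a mean-zero, variance-one bounded variable. -/
lemma exists_pos_tail {ζ : Ω → ℝ} (hζ : Measurable ζ) {C : ℝ} (hC : ∀ ω, |ζ ω| ≤ C)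
    (hmean : ∫ ω, ζ ω ∂μ = 0) (hvar : ∫ ω, (ζ ω) ^ 2 ∂μ = 1) :
    ∃ ε : ℝ, 0 < ε ∧ 0 < μ {ω | ε ≤ ζ ω} := by
  have hint : Integrable ζ μ := by
    refine Integrable.mono' (integrable_const C) hζ.aestronglyMeasurable ?_
    exact Filter.Eventually.of_forall (fun ω => by simpa using hC ω)
  have hpos : 0 < μ {ω | 0 < ζ ω} := by
    by_contra h
    push_neg at h
    have h0 : μ {ω | 0 < ζ ω} = 0 := le_antisymm (by simpa using h) (by simp)
    have hle : ∀ᵐ ω ∂μ, ζ ω ≤ 0 := by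
      refine (ae_iff).2 ?_
      simpa [not_le] using h0
    have hnn : 0 ≤ᵐ[μ] fun ω => -ζ ω := hle.mono (fun ω h => by simpa using h)
    have hintneg : Integrable (fun ω => -ζ ω) μ := hint.neg
    have hzero : ∫ ω, -ζ ω ∂μ = 0 := by simp [integral_neg, hmean]
    have := (integral_eq_zero_iff_of_nonneg_ae hnn hintneg).1 hzero
    have hζ0 : ζ =ᵐ[μ] 0 := this.mono (fun ω h => by simpa using congrArg Neg.neg h)
    have : ∫ ω, (ζ ω) ^ 2 ∂μ = ∫ ω, (0:ℝ) ∂μ := by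
      refine integral_congr_ae (hζ0.mono fun ω h => ?_)
      simp only [Pi.zero_apply] at h
      simp [h]
    rw [integral_zero] at this
    rw [hvar] at this
    exact one_ne_zero this
  have hunion : {ω | 0 < ζ ω} = ⋃ k : ℕ, {ω | 1 / (k + 1 : ℝ) ≤ ζ ω} := by
    ext ω
    simp only [Set.mem_setOf_eq, Set.mem_iUnion]
    constructor
    · intro h
      obtain ⟨k, hk⟩ := exists_nat_one_div_lt h
      exact ⟨k, le_of_lt hk⟩
    · intro ⟨k, hk⟩
      exact lt_of_lt_of_le (by positivity) hk
  by_contra h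
  push_neg at h
  have hall : ∀ k : ℕ, μ {ω | 1 / (k + 1 : ℝ) ≤ ζ ω} = 0 := by
    intro k
    have := h (1 / (k + 1 : ℝ)) (by positivity)
    exact le_antisymm (by simpa using this) (by simp)
  have : μ {ω | 0 < ζ ω} = 0 := by
    rw [hunion]
    exact measure_iUnion_null hall
  rw [this] at hpos
  exact lt_irrefl _ hpos

end cheb

section pos

variable {Ω : Type*} [MeasurableSpace Ω] {μ : Measure Ω} [IsProbabilityMeasure μ]

lemma tail_sum_pos {η : ℕ → Ω → ℝ}
    (hind : iIndepFun η μ)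
    {ε : ℝ} (hε : 0 < ε) {δ : ENNReal} (hδ : 0 < δ)
    (htail : ∀ i, δ ≤ μ (η i ⁻¹' Ici ε)) (u : ℝ) :
    ∃ m : ℕ, 0 < μ {ω | |∑ i ∈ Finset.range (m + 1), η i ω| / Real.sqrt (m + 1) > u} := by
  obtain ⟨m, hm⟩ := exists_nat_gt ((u / ε) ^ 2)
  refine ⟨m, ?_⟩
  have hmsqrt : (0 : ℝ) < Real.sqrt (m + 1) := by positivity
  have hu : u < ε * Real.sqrt (m + 1) := by
    have h1 : Real.sqrt ((u / ε) ^ 2) < Real.sqrt (m + 1) := by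
      refine Real.sqrt_lt_sqrt (by positivity) ?_
      exact lt_of_lt_of_le hm (by push_cast; linarith)
    rw [Real.sqrt_sq_eq_abs] at h1
    have h2 : u / ε < Real.sqrt (m + 1) := lt_of_le_of_lt (le_abs_self _) h1
    calc u = (u / ε) * ε := by field_simp
    _ < Real.sqrt (m + 1) * ε := by
        exact mul_lt_mul_of_pos_right h2 hε
    _ = ε * Real.sqrt (m + 1) := mul_comm _ _
  have hmeasE := hind.measure_inter_preimage_eq_mul (Finset.range (m + 1))
    (sets := fun _ => Ici ε) (fun i _ => measurableSet_Ici)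
  have hEpos : 0 < μ (⋂ i ∈ Finset.range (m + 1), η i ⁻¹' Ici ε) := by
    rw [hmeasE]
    have hprod : δ ^ (m + 1) ≤ ∏ i ∈ Finset.range (m + 1), μ (η i ⁻¹' Ici ε) := by
      calc δ ^ (m + 1) = ∏ _i ∈ Finset.range (m + 1), δ := by
            rw [Finset.prod_const, Finset.card_range]
      _ ≤ _ := Finset.prod_le_prod' (fun i _ => htail i)
    refine lt_of_lt_of_le ?_ hprod
    exact ENNReal.pow_pos hδ _
  refine lt_of_lt_of_le hEpos (measure_mono ?_)
  intro ω hω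
  simp only [Set.mem_iInter, Set.mem_preimage, Set.mem_Ici] at hω
  simp only [Set.mem_setOf_eq]
  have hsum : ((m : ℝ) + 1) * ε ≤ ∑ i ∈ Finset.range (m + 1), η i ω := by
    calc ((m : ℝ) + 1) * ε = ∑ _i ∈ Finset.range (m + 1), ε := by
          rw [Finset.sum_const, Finset.card_range]; push_cast; ring
    _ ≤ _ := Finset.sum_le_sum (fun i hi => hω i hi)
  have habs : ((m : ℝ) + 1) * ε ≤ |∑ i ∈ Finset.range (m + 1), η i ω| :=
    le_trans hsum (le_abs_self _)
  rw [gt_iff_lt, lt_div_iff₀ hmsqrt]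
  refine lt_of_lt_of_le (mul_lt_mul_of_pos_right hu hmsqrt) ?_
  calc ε * Real.sqrt (m + 1) * Real.sqrt (m + 1) = ((m : ℝ) + 1) * ε := by
        rw [mul_assoc, Real.mul_self_sqrt (by positivity)]; ring
  _ ≤ _ := habs

end pos


set_option maxHeartbeats 1000000 in
/-- Theorem 3.1: `sup_{x ∈ I} |E[f(Sₙ)] − f(x)| ≤ ∫_0^∞ ω_σ[f](z/√n) |dQ_ζ(z)|`, where
`Q_ζ(u) = sup_m P(m^{-1/2}|∑_{i≤m} ζ(i)| > u)` is the absolute tail function of the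
standardized variable `ζ = (ξ₁ − x)/σ(x)` and the integral is the Lebesgue–Stieltjes
integral against the non-increasing function `Q_ζ`. -/
theorem bernstein_type_sup_bound_via_ATF
    {Ω : Type*} [MeasurableSpace Ω] (μ : Measure Ω) [IsProbabilityMeasure μ]
    (n : ℕ) (hn : 0 < n) (a b : ℝ) (hab : a ≤ b) (σ : ℝ → ℝ)
    (ξ : ℝ → Fin n → Ω → ℝ) (η : ℝ → ℕ → Ω → ℝ)
    (Q : ℝ → ℝ → ℝ) (negQ : ℝ → StieltjesFunction ℝ)
    (f : ℝ → ℝ) (hfu : UniformContinuousOn f (Icc a b))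
    (M : ℝ) (hfM : ∀ y ∈ Icc a b, |f y| ≤ M)
    (hmeas : ∀ x ∈ Icc a b, ∀ i, Measurable (ξ x i))
    (hrange : ∀ x ∈ Icc a b, ∀ i, ∀ ω, ξ x i ω ∈ Icc a b)
    (hindep : ∀ x ∈ Icc a b, iIndepFun (ξ x) μ)
    (hident : ∀ x ∈ Icc a b, ∀ i j, μ.map (ξ x i) = μ.map (ξ x j))
    (hmean : ∀ x ∈ Icc a b, ∀ i, ∫ ω, ξ x i ω ∂μ = x)
    (hσpos : ∀ x ∈ Icc a b, 0 < σ x)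
    (hvar : ∀ x ∈ Icc a b, ∀ i, ∫ ω, (ξ x i ω - x) ^ 2 ∂μ = (σ x) ^ 2)
    (hηmeas : ∀ x ∈ Icc a b, ∀ i, Measurable (η x i))
    (hηindep : ∀ x ∈ Icc a b, iIndepFun (η x) μ)
    (hηident : ∀ x ∈ Icc a b, ∀ i,
      μ.map (η x i) = μ.map (fun ω => (ξ x ⟨0, hn⟩ ω - x) / σ x))
    (hQ : ∀ x ∈ Icc a b, ∀ u, 0 ≤ u →
      ENNReal.ofReal (Q x u)
        = ⨆ m : ℕ, μ {ω | |∑ i ∈ Finset.range (m + 1), η x i ω|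
            / Real.sqrt (m + 1) > u})
    (hnegQ : ∀ x ∈ Icc a b, ∀ z, 0 ≤ z → (negQ x) z = -(Q x z)) :
    ∀ x ∈ Icc a b,
      |(∫ ω, f ((∑ i, ξ x i ω) / n) ∂μ) - f x|
        ≤ (∫⁻ z in Ioi (0 : ℝ),
            ENNReal.ofReal (dtMod f σ a b (z / Real.sqrt n)) ∂(negQ x).measure).toReal := by
  intro x hx
  have hσ : 0 < σ x := hσpos x hx
  have hnR : (0 : ℝ) < n := by exact_mod_cast hn
  have hsqn : (0 : ℝ) < Real.sqrt n := Real.sqrt_pos.2 hnR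
  -- standardized variables
  set ζ : Fin n → Ω → ℝ := fun i ω => (ξ x i ω - x) / σ x with hζdef
  set ζ0 : Ω → ℝ := fun ω => (ξ x ⟨0, hn⟩ ω - x) / σ x with hζ0def
  have hξm : ∀ i, Measurable (ξ x i) := hmeas x hx
  have hζm : ∀ i, Measurable (ζ i) := fun i => ((hξm i).sub_const x).div_const _
  have hζ0m : Measurable ζ0 := ((hξm _).sub_const x).div_const _
  set W : Ω → ℝ := fun ω => ∑ i, ζ i ω with hWdef
  have hWm : Measurable W := Finset.measurable_sum _ (fun i _ => hζm i)
  set Z : Ω → ℝ := fun ω => |W ω| / Real.sqrt n with hZdef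
  have hZm : Measurable Z := hWm.abs.div_const _
  have hZnn : ∀ ω, 0 ≤ Z ω := fun ω => by positivity
  set g : ℝ → ℝ := fun z => dtMod f σ a b (z / Real.sqrt n) with hgdef
  set ν : Measure ℝ := (negQ x).measure with hνdef
  -- dtMod facts
  have hgmono : Monotone g := fun z z' h =>
    dtMod_mono hab hfM (by gcongr)
  have hg0 : g 0 = 0 := by
    simp only [hgdef, zero_div]
    exact dtMod_zero hab hfM
  have hgnn : ∀ z, 0 ≤ z → 0 ≤ g z := fun z hz => hg0 ▸ hgmono hz
  have hgle : ∀ z, g z ≤ 2 * M := fun z => dtMod_le hab hfM _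
  have hgm : Measurable g := hgmono.measurable
  -- bound on ζ
  have hζbd : ∀ i ω, |ζ i ω| ≤ (b - a) / σ x := by
    intro i ω
    have h1 := hrange x hx i ω
    rw [hζdef]
    simp only
    rw [abs_div, abs_of_pos hσ]
    gcongr
    rw [abs_le]
    exact ⟨by linarith [h1.1, hx.2], by linarith [h1.2, hx.1]⟩
  have hζ0bd : ∀ ω, |ζ0 ω| ≤ (b - a) / σ x := fun ω => hζbd ⟨0, hn⟩ ω
  -- moments of ζ0
  have hξint : ∀ i, Integrable (ξ x i) μ := by
    intro i
    refine Integrable.mono' (integrable_const (|a| + |b|)) (hξm i).aestronglyMeasurable ?_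
    refine Filter.Eventually.of_forall (fun ω => ?_)
    have h1 := hrange x hx i ω
    rw [Real.norm_eq_abs, abs_le]
    constructor
    · have : -(|a| + |b|) ≤ a := by
        have := neg_abs_le a; have := abs_nonneg b; linarith
      linarith [h1.1]
    · have : b ≤ |a| + |b| := by
        have := le_abs_self b; have := abs_nonneg a; linarith
      linarith [h1.2]
  have hζ0mean : ∫ ω, ζ0 ω ∂μ = 0 := by
    rw [hζ0def]
    simp only
    rw [integral_div, integral_sub (hξint _) (integrable_const x), integral_const]
    simp [hmean x hx ⟨0, hn⟩]
  have hζ0var : ∫ ω, (ζ0 ω) ^ 2 ∂μ = 1 := by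
    rw [hζ0def]
    simp only [div_pow]
    rw [integral_div, hvar x hx ⟨0, hn⟩]
    field_simp
  -- η facts
  have hηm : ∀ i, Measurable (η x i) := hηmeas x hx
  have hηlaw : ∀ i, μ.map (η x i) = μ.map ζ0 := hηident x hx
  have hηbd : ∀ i, ∀ᵐ ω ∂μ, |η x i ω| ≤ (b - a) / σ x := fun i =>
    ae_bound_of_map_eq hζ0m (hηm i) hζ0bd (hηlaw i)
  have hηL2 : ∀ i, MemLp (η x i) 2 μ := by
    intro i
    refine MemLp.of_bound (hηm i).aestronglyMeasurable ((b - a) / σ x) ?_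
    exact (hηbd i).mono (fun ω h => by rwa [Real.norm_eq_abs])
  have hηmean : ∀ i, ∫ ω, η x i ω ∂μ = 0 := by
    intro i
    have := integral_comp_of_map_eq hζ0m (hηm i) (hηlaw i) (F := id) measurable_id
    simpa using this.trans hζ0mean
  have hηsq : ∀ i, ∫ ω, (η x i ω) ^ 2 ∂μ = 1 := by
    intro i
    have := integral_comp_of_map_eq hζ0m (hηm i) (hηlaw i)
      (F := fun y => y ^ 2) (measurable_id.pow_const 2)
    simpa using this.trans hζ0var
  have hηvar : ∀ i, variance (η x i) μ = 1 := by
    intro i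
    rw [variance_eq_sub (hηL2 i)]
    have h2 : μ[(η x i) ^ 2] = 1 := by
      rw [show (η x i) ^ 2 = fun ω => (η x i ω) ^ 2 from rfl]
      exact hηsq i
    rw [h2, hηmean i]
    norm_num
  -- the tail sup
  set s : ℝ → ENNReal := fun u => ⨆ m : ℕ, μ {ω | |∑ i ∈ Finset.range (m + 1), η x i ω|
      / Real.sqrt (m + 1) > u} with hsdef
  have hQs : ∀ u, 0 ≤ u → ENNReal.ofReal (Q x u) = s u := fun u hu => hQ x hx u hu
  have hs1 : ∀ u, s u ≤ 1 := fun u => iSup_le (fun m => prob_le_one)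
  have hscheb : ∀ u, 0 < u → s u ≤ ENNReal.ofReal (1 / u ^ 2) := fun u hu =>
    iSup_le (fun m => cheb_sum hηL2 (hηindep x hx) hηmean hηvar hu m)
  have hspos : ∀ u, 0 < s u := by
    intro u
    obtain ⟨ε, hε, hδ⟩ := exists_pos_tail hζ0m hζ0bd hζ0mean hζ0var
    have htail : ∀ i, μ (ζ0 ⁻¹' Ici ε) ≤ μ (η x i ⁻¹' Ici ε) := by
      intro i
      rw [← Measure.map_apply (hηm i) measurableSet_Ici, hηlaw i,
        Measure.map_apply hζ0m measurableSet_Ici]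
    have hδ' : 0 < μ (ζ0 ⁻¹' Ici ε) := hδ
    obtain ⟨m, hm⟩ := tail_sum_pos (hηindep x hx) hε hδ' htail u
    refine lt_of_lt_of_le hm ?_
    rw [hsdef]
    exact le_iSup (fun m : ℕ => μ {ω | |∑ i ∈ Finset.range (m + 1), η x i ω|
      / Real.sqrt (m + 1) > u}) m
  -- Q facts
  have hQpos : ∀ u, 0 ≤ u → 0 < Q x u := fun u hu =>
    ENNReal.ofReal_pos.1 ((hQs u hu) ▸ hspos u)
  have hQle1 : ∀ u, 0 ≤ u → Q x u ≤ 1 := by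
    intro u hu
    have : ENNReal.ofReal (Q x u) ≤ 1 := (hQs u hu) ▸ hs1 u
    exact_mod_cast (ENNReal.ofReal_le_one).1 this
  have hQcheb : ∀ u, 0 < u → Q x u ≤ 1 / u ^ 2 := by
    intro u hu
    have h := (hQs u hu.le) ▸ hscheb u hu
    exact (ENNReal.ofReal_le_ofReal_iff (by positivity)).1 h
  -- tendsto of negQ
  have htend : Tendsto (negQ x) atTop (𝓝 0) := by
    have hub : ∀ᶠ u in atTop, (negQ x) u ≤ 0 := by
      filter_upwards [eventually_ge_atTop (0:ℝ)] with u hu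
      rw [hnegQ x hx u hu]
      linarith [hQpos u hu]
    have hlb : ∀ᶠ u in atTop, -(1 / u ^ 2) ≤ (negQ x) u := by
      filter_upwards [eventually_gt_atTop (0:ℝ)] with u hu
      rw [hnegQ x hx u hu.le]
      have := hQcheb u hu
      linarith
    have h0 : Tendsto (fun u : ℝ => ((u : ℝ) ^ 2)⁻¹) atTop (𝓝 0) :=
      (tendsto_pow_atTop (n := 2) (by norm_num)).inv_tendsto_atTop
    have h1 : Tendsto (fun u : ℝ => -(1 / u ^ 2)) atTop (𝓝 0) := by
      simpa [one_div] using h0.neg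
    exact tendsto_of_tendsto_of_tendsto_of_le_of_le' h1 tendsto_const_nhds hlb hub
  -- measure of Ioi
  have hνIoi' : ∀ u : ℝ, ν (Ioi u) = ENNReal.ofReal (0 - (negQ x) u) := by
    intro u
    have hmono : Monotone (fun k : ℕ => Ioc u (u + k)) := by
      intro k l hkl
      exact Ioc_subset_Ioc le_rfl (add_le_add (le_refl u) (by exact_mod_cast hkl))
    have hunion : ⋃ k : ℕ, Ioc u (u + k) = Ioi u := by
      ext y
      simp only [Set.mem_iUnion, Set.mem_Ioc, Set.mem_Ioi]
      constructor
      · rintro ⟨k, hk, _⟩; exact hk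
      · intro hy
        obtain ⟨k, hk⟩ := exists_nat_ge (y - u)
        exact ⟨k, hy, by linarith⟩
    have h1 : Tendsto (fun k : ℕ => ν (Ioc u (u + k))) atTop (𝓝 (ν (Ioi u))) := by
      have := tendsto_measure_iUnion_atTop (μ := ν) hmono
      rwa [hunion] at this
    have h2 : Tendsto (fun k : ℕ => ν (Ioc u (u + k))) atTop
        (𝓝 (ENNReal.ofReal (0 - (negQ x) u))) := by
      have h3 : ∀ k : ℕ, ν (Ioc u (u + k)) = ENNReal.ofReal ((negQ x) (u + k) - (negQ x) u) :=
        fun k => (negQ x).measure_Ioc u (u + k)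
      simp_rw [h3]
      refine ENNReal.tendsto_ofReal (Tendsto.sub_const ?_ _)
      refine htend.comp ?_
      exact tendsto_atTop_add_const_left atTop u tendsto_natCast_atTop_atTop
    exact tendsto_nhds_unique h1 h2
  have hνIoi : ∀ u, 0 ≤ u → ν (Ioi u) = ENNReal.ofReal (Q x u) := by
    intro u hu
    rw [hνIoi', hnegQ x hx u hu]
    norm_num
  have hνIoi0 : ν (Ioi (0:ℝ)) ≤ 1 := by
    rw [hνIoi 0 le_rfl]
    exact ENNReal.ofReal_le_one.2 (hQle1 0 le_rfl)
  -- tail bound for Z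
  have htailZ : ∀ u, 0 ≤ u → μ {ω | u < Z ω} ≤ ENNReal.ofReal (Q x u) := by
    intro u hu
    -- rewrite as a set about W
    have hset : {ω | u < Z ω} = W ⁻¹' {y : ℝ | u * Real.sqrt n < |y|} := by
      ext ω
      simp only [Set.mem_setOf_eq, Set.mem_preimage, hZdef]
      rw [lt_div_iff₀ hsqn]
    have hsetm : MeasurableSet {y : ℝ | u * Real.sqrt n < |y|} :=
      measurableSet_lt measurable_const measurable_abs
    -- law of W equals law of sum of η
    have hζindep : iIndepFun ζ μ := by
      have := (hindep x hx).comp (fun _ => fun y => (y - x) / σ x)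
        (fun _ => (measurable_id.sub_const x).div_const _)
      exact this
    have hηfin : iIndepFun (fun i : Fin n => η x i) μ :=
      iIndepFun_fin_of_nat n (hηindep x hx)
    have hφm : Measurable (fun y : ℝ => (y - x) / σ x) :=
      (measurable_id.sub_const x).div_const _
    have hζlaw : ∀ i : Fin n, μ.map (ζ i) = μ.map (η x (i : ℕ)) := by
      intro i
      have h1 : (μ.map (ξ x i)).map (fun y : ℝ => (y - x) / σ x) = μ.map (ζ i) :=
        Measure.map_map hφm (hξm i)
      have h2 : (μ.map (ξ x ⟨0, hn⟩)).map (fun y : ℝ => (y - x) / σ x) = μ.map ζ0 :=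
        Measure.map_map hφm (hξm _)
      calc μ.map (ζ i) = (μ.map (ξ x i)).map (fun y : ℝ => (y - x) / σ x) := h1.symm
      _ = (μ.map (ξ x ⟨0, hn⟩)).map (fun y : ℝ => (y - x) / σ x) := by
          rw [hident x hx i ⟨0, hn⟩]
      _ = μ.map ζ0 := h2
      _ = μ.map (η x (i : ℕ)) := (hηlaw _).symm
    have hWlaw : μ.map W = μ.map (fun ω => ∑ i : Fin n, η x i ω) := by
      rw [hWdef]
      exact map_sum_eq_map_sum hζm (fun i => hηm i) hζindep hηfin hζlaw
    have e1 : μ {ω | u < Z ω} = (μ.map W) {y : ℝ | u * Real.sqrt n < |y|} := by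
      rw [hset]
      exact (Measure.map_apply hWm hsetm).symm
    have hsm : Measurable (fun ω => ∑ i : Fin n, η x i ω) :=
      Finset.measurable_sum Finset.univ (fun i _ => hηm (i : ℕ))
    have e2 : (μ.map (fun ω => ∑ i : Fin n, η x i ω)) {y : ℝ | u * Real.sqrt n < |y|}
        = μ {ω | u * Real.sqrt n < |∑ i : Fin n, η x i ω|} :=
      Measure.map_apply hsm hsetm
    have hμW : μ {ω | u < Z ω} = μ {ω | u * Real.sqrt n < |∑ i : Fin n, η x i ω|} := by
      rw [e1, hWlaw, e2]
    -- identify with the (n-1)-th term of the sup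
    obtain ⟨m, hnm⟩ : ∃ m, n = m + 1 := ⟨n - 1, (Nat.succ_pred_eq_of_pos hn).symm⟩
    have hsum_eq : ∀ ω, ∑ i : Fin n, η x i ω = ∑ i ∈ Finset.range (m + 1), η x i ω := by
      intro ω
      rw [← Finset.sum_range (fun i => η x i ω), hnm]
    have hcast : (n : ℝ) = (m : ℝ) + 1 := by rw [hnm]; push_cast; ring
    have hfinal : {ω | u * Real.sqrt n < |∑ i : Fin n, η x i ω|}
        = {ω | |∑ i ∈ Finset.range (m + 1), η x i ω| / Real.sqrt (m + 1) > u} := by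
      ext ω
      simp only [Set.mem_setOf_eq, gt_iff_lt]
      rw [hsum_eq ω, hcast, lt_div_iff₀ (by positivity)]
    rw [hμW, hfinal, hQs u hu, hsdef]
    exact le_iSup (fun m : ℕ => μ {ω | |∑ i ∈ Finset.range (m + 1), η x i ω|
      / Real.sqrt (m + 1) > u}) m
  -- Ici bound
  have hIci : ∀ c : ℝ, 0 < c → μ {ω | c ≤ Z ω} ≤ ν (Ici c) := by
    intro c hc
    have hνIci : ν (Ici c) = ENNReal.ofReal (0 - leftLim (negQ x) c) := by
      rw [hνdef, StieltjesFunction.measure_Ici (negQ x) htend c]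
    set uk : ℕ → ℝ := fun k => c - 1 / (k + 1) with hukdef
    have huk_lt : ∀ k, uk k < c := fun k => by
      rw [hukdef]; simp only; have : (0:ℝ) < 1 / (k+1) := by positivity
      linarith
    have huk_tend : Tendsto uk atTop (𝓝[<] c) := by
      refine tendsto_nhdsWithin_of_tendsto_nhds_of_eventually_within _ ?_ ?_
      · have h1 : Tendsto (fun k : ℕ => 1 / ((k : ℝ) + 1)) atTop (𝓝 0) :=
          tendsto_one_div_add_atTop_nhds_zero_nat
        have := h1.const_sub c
        simpa [hukdef] using this
      · exact Filter.Eventually.of_forall (fun k => huk_lt k)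
    have hlim : Tendsto (fun k => ENNReal.ofReal (0 - (negQ x) (uk k))) atTop
        (𝓝 (ν (Ici c))) := by
      rw [hνIci]
      exact (ENNReal.continuous_ofReal.tendsto _).comp
        ((((negQ x).mono.tendsto_leftLim c).comp huk_tend).const_sub 0)
    refine ge_of_tendsto hlim ?_
    have hev : ∀ᶠ k in atTop, 0 ≤ uk k := by
      have h1 : Tendsto uk atTop (𝓝 c) := by
        have h2 : Tendsto (fun k : ℕ => 1 / ((k : ℝ) + 1)) atTop (𝓝 0) :=
          tendsto_one_div_add_atTop_nhds_zero_nat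
        have := h2.const_sub c
        simpa [hukdef] using this
      exact h1.eventually (eventually_ge_nhds hc)
    filter_upwards [hev] with k hk
    have hsub : {ω | c ≤ Z ω} ⊆ {ω | uk k < Z ω} :=
      fun ω hω => lt_of_lt_of_le (huk_lt k) hω
    calc μ {ω | c ≤ Z ω} ≤ μ {ω | uk k < Z ω} := measure_mono hsub
    _ ≤ ENNReal.ofReal (Q x (uk k)) := htailZ (uk k) hk
    _ = ENNReal.ofReal (0 - (negQ x) (uk k)) := by rw [hnegQ x hx _ hk]; norm_num
  -- per-t comparison between the two layer-cake integrands
  have hkey : ∀ t : ℝ, 0 < t →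
      μ {ω | t < g (Z ω)} ≤ ν ({z | t < g z} ∩ Ioi 0) := by
    intro t ht
    set A : Set ℝ := {z | t < g z} ∩ Ioi 0 with hAdef
    have hZin : ∀ ω, t < g (Z ω) → Z ω ∈ A := by
      intro ω h
      have hZpos : 0 < Z ω := by
        rcases lt_or_eq_of_le (hZnn ω) with h' | h'
        · exact h'
        · exfalso; rw [← h', hg0] at h; exact absurd h (not_lt.2 ht.le)
      exact ⟨h, hZpos⟩
    rcases eq_empty_or_nonempty A with hA | hA
    · have hempty : {ω | t < g (Z ω)} = (∅ : Set Ω) := by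
        ext ω
        simp only [Set.mem_setOf_eq, Set.mem_empty_iff_false, iff_false, not_lt]
        by_contra h
        push_neg at h
        have : Z ω ∈ A := hZin ω h
        rw [hA] at this
        exact this
      rw [hempty]
      simp
    · set c := sInf A with hcdef
      have hbdd : BddBelow A := ⟨0, fun z hz => le_of_lt hz.2⟩
      have hc0 : 0 ≤ c := le_csInf hA (fun z hz => le_of_lt hz.2)
      by_cases hcA : c ∈ A
      · have hcpos : 0 < c := hcA.2
        have hsub1 : {ω | t < g (Z ω)} ⊆ {ω | c ≤ Z ω} :=
          fun ω h => csInf_le hbdd (hZin ω h)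
        have hsub2 : Ici c ⊆ A := by
          intro z hz
          exact ⟨lt_of_lt_of_le hcA.1 (hgmono hz), lt_of_lt_of_le hcpos hz⟩
        calc μ {ω | t < g (Z ω)} ≤ μ {ω | c ≤ Z ω} := measure_mono hsub1
        _ ≤ ν (Ici c) := hIci c hcpos
        _ ≤ ν A := measure_mono hsub2
      · have hsub1 : {ω | t < g (Z ω)} ⊆ {ω | c < Z ω} := by
          intro ω h
          have hmem := hZin ω h
          rcases lt_or_eq_of_le (csInf_le hbdd hmem) with h' | h'
          · exact h'
          · exfalso
            rw [← h'] at hmem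
            exact hcA hmem
        have hsub2 : Ioi c ⊆ A := by
          intro z hz
          obtain ⟨w, hw, hwz⟩ := exists_lt_of_csInf_lt hA hz
          exact ⟨lt_of_lt_of_le hw.1 (hgmono hwz.le), lt_of_le_of_lt hc0 hz⟩
        calc μ {ω | t < g (Z ω)} ≤ μ {ω | c < Z ω} := measure_mono hsub1
        _ ≤ ENNReal.ofReal (Q x c) := htailZ c hc0
        _ = ν (Ioi c) := (hνIoi c hc0).symm
        _ ≤ ν A := measure_mono hsub2
  -- the empirical mean and the pointwise bound
  set Sn : Ω → ℝ := fun ω => (∑ i, ξ x i ω) / n with hSndef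
  have hSmem : ∀ ω, Sn ω ∈ Icc a b := by
    intro ω
    have hlb : (n : ℝ) * a ≤ ∑ i, ξ x i ω := by
      calc (n : ℝ) * a = ∑ _i : Fin n, a := by
            rw [Finset.sum_const, Finset.card_univ, Fintype.card_fin, nsmul_eq_mul]
      _ ≤ ∑ i, ξ x i ω := Finset.sum_le_sum (fun i _ => (hrange x hx i ω).1)
    have hub : ∑ i, ξ x i ω ≤ (n : ℝ) * b := by
      calc ∑ i, ξ x i ω ≤ ∑ _i : Fin n, b :=
            Finset.sum_le_sum (fun i _ => (hrange x hx i ω).2)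
      _ = (n : ℝ) * b := by
            rw [Finset.sum_const, Finset.card_univ, Fintype.card_fin, nsmul_eq_mul]
    constructor
    · rw [hSndef]
      simp only
      rw [le_div_iff₀ hnR]
      linarith
    · rw [hSndef]
      simp only
      rw [div_le_iff₀ hnR]
      linarith
  have hpoint : ∀ ω, |f (Sn ω) - f x| ≤ g (Z ω) := by
    intro ω
    have hW' : W ω = (∑ i, (ξ x i ω - x)) / σ x := by
      rw [hWdef]
      simp only [hζdef]
      rw [Finset.sum_div]
    have hsub : ∑ i, (ξ x i ω - x) = (∑ i, ξ x i ω) - n * x := by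
      rw [Finset.sum_sub_distrib, Finset.sum_const, Finset.card_univ, Fintype.card_fin,
        nsmul_eq_mul]
    have hSn : Sn ω = x + (W ω / n) * σ x := by
      rw [hSndef, hW', hsub]
      simp only
      field_simp
      ring
    have habs : |W ω / n| ≤ Z ω / Real.sqrt n := by
      have h1 : Z ω / Real.sqrt n = |W ω| / n := by
        rw [hZdef]
        simp only
        rw [div_div, Real.mul_self_sqrt hnR.le]
      rw [h1, abs_div, abs_of_pos hnR]
    have hmem2 : x + (W ω / n) * σ x ∈ Icc a b := hSn ▸ hSmem ω
    have hle := le_dtMod hab hfM hx habs hmem2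
    rw [← hSn] at hle
    exact hle
  -- integrability
  have hSnm : Measurable Sn := (Finset.measurable_sum _ (fun i _ => hξm i)).div_const _
  have hFcont : Continuous (fun y => f (dtClamp a b y)) := by
    have hfc : ContinuousOn f (Icc a b) := hfu.continuousOn
    refine ContinuousOn.comp_continuous hfc ?_ (fun y => dtClamp_mem hab y)
    exact continuous_const.max (continuous_const.min continuous_id)
  have hfSn_eq : (fun ω => f (Sn ω)) = fun ω => f (dtClamp a b (Sn ω)) :=
    funext fun ω => by rw [dtClamp_of_mem (hSmem ω)]
  have hfSnm : Measurable (fun ω => f (Sn ω)) := by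
    rw [hfSn_eq]
    exact hFcont.measurable.comp hSnm
  have hint : Integrable (fun ω => f (Sn ω)) μ := by
    refine Integrable.mono' (integrable_const M) hfSnm.aestronglyMeasurable ?_
    exact Filter.Eventually.of_forall fun ω => by
      rw [Real.norm_eq_abs]; exact hfM _ (hSmem ω)
  have hintsub : Integrable (fun ω => f (Sn ω) - f x) μ := hint.sub (integrable_const _)
  -- assembling the chain
  have hstep1 : |(∫ ω, f (Sn ω) ∂μ) - f x| ≤ ∫ ω, |f (Sn ω) - f x| ∂μ := by
    have heq : (∫ ω, f (Sn ω) ∂μ) - f x = ∫ ω, (f (Sn ω) - f x) ∂μ := by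
      rw [integral_sub hint (integrable_const _), integral_const]
      simp
    rw [heq]
    simpa [Real.norm_eq_abs] using
      norm_integral_le_integral_norm (μ := μ) (fun ω => f (Sn ω) - f x)
  have hstep2 : ENNReal.ofReal (∫ ω, |f (Sn ω) - f x| ∂μ)
      = ∫⁻ ω, ENNReal.ofReal |f (Sn ω) - f x| ∂μ :=
    ofReal_integral_eq_lintegral_ofReal hintsub.abs
      (Filter.Eventually.of_forall fun ω => abs_nonneg _)
  have hstep3 : ∫⁻ ω, ENNReal.ofReal |f (Sn ω) - f x| ∂μ
      ≤ ∫⁻ ω, ENNReal.ofReal (g (Z ω)) ∂μ :=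
    lintegral_mono fun ω => ENNReal.ofReal_le_ofReal (hpoint ω)
  have hgZm : Measurable (fun ω => g (Z ω)) := hgm.comp hZm
  have hstep4 : ∫⁻ ω, ENNReal.ofReal (g (Z ω)) ∂μ
      = ∫⁻ t in Ioi 0, μ {ω | t < g (Z ω)} :=
    lintegral_eq_lintegral_meas_lt μ
      (Filter.Eventually.of_forall fun ω => hgnn _ (hZnn ω)) hgZm.aemeasurable
  have hνmono : Antitone (fun t : ℝ => ν ({z | t < g z} ∩ Ioi 0)) := by
    intro t t' htt'
    refine measure_mono (fun z hz => ?_)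
    exact ⟨lt_of_le_of_lt htt' hz.1, hz.2⟩
  have hstep5 : ∫⁻ t in Ioi 0, μ {ω | t < g (Z ω)}
      ≤ ∫⁻ t in Ioi 0, ν ({z | t < g z} ∩ Ioi 0) :=
    setLIntegral_mono hνmono.measurable (fun t ht => hkey t ht)
  have hstep6 : (∫⁻ t in (Ioi (0:ℝ)), ν ({z | t < g z} ∩ Ioi 0))
      = ∫⁻ z in Ioi 0, ENNReal.ofReal (g z) ∂ν := by
    have hnn : 0 ≤ᵐ[ν.restrict (Ioi 0)] g :=
      (ae_restrict_iff' measurableSet_Ioi).2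
        (Filter.Eventually.of_forall fun z hz => hgnn z (le_of_lt hz))
    have happ : ∀ t : ℝ, (ν.restrict (Ioi 0)) {z | t < g z} = ν ({z | t < g z} ∩ Ioi 0) :=
      fun t => Measure.restrict_apply (hgm measurableSet_Ioi)
    calc (∫⁻ t in (Ioi (0:ℝ)), ν ({z | t < g z} ∩ Ioi 0))
        = ∫⁻ t in (Ioi (0:ℝ)), (ν.restrict (Ioi 0)) {z | t < g z} := by
          refine lintegral_congr (fun t => ?_)
          rw [happ t]
    _ = ∫⁻ z, ENNReal.ofReal (g z) ∂(ν.restrict (Ioi 0)) :=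
        (lintegral_eq_lintegral_meas_lt (ν.restrict (Ioi 0)) hnn hgm.aemeasurable).symm
  have hfin : (∫⁻ z in Ioi (0:ℝ), ENNReal.ofReal (g z) ∂ν) ≠ ⊤ := by
    have hb : (∫⁻ z in Ioi (0:ℝ), ENNReal.ofReal (g z) ∂ν)
        ≤ ∫⁻ _z in Ioi (0:ℝ), ENNReal.ofReal (2 * M) ∂ν :=
      lintegral_mono fun z => ENNReal.ofReal_le_ofReal (hgle z)
    have hc : (∫⁻ _z in Ioi (0:ℝ), ENNReal.ofReal (2 * M) ∂ν)
        = ENNReal.ofReal (2 * M) * ν (Ioi 0) := by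
      rw [lintegral_const, Measure.restrict_apply_univ]
    refine ne_top_of_le_ne_top ?_ (hb.trans_eq hc)
    exact ENNReal.mul_ne_top ENNReal.ofReal_ne_top
      (lt_of_le_of_lt hνIoi0 ENNReal.one_lt_top).ne
  have hchain : ENNReal.ofReal |(∫ ω, f (Sn ω) ∂μ) - f x|
      ≤ ∫⁻ z in Ioi (0:ℝ), ENNReal.ofReal (g z) ∂ν := by
    calc ENNReal.ofReal |(∫ ω, f (Sn ω) ∂μ) - f x|
        ≤ ENNReal.ofReal (∫ ω, |f (Sn ω) - f x| ∂μ) := ENNReal.ofReal_le_ofReal hstep1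
    _ = ∫⁻ ω, ENNReal.ofReal |f (Sn ω) - f x| ∂μ := hstep2
    _ ≤ ∫⁻ ω, ENNReal.ofReal (g (Z ω)) ∂μ := hstep3
    _ = ∫⁻ t in Ioi 0, μ {ω | t < g (Z ω)} := hstep4
    _ ≤ ∫⁻ t in Ioi 0, ν ({z | t < g z} ∩ Ioi 0) := hstep5
    _ = ∫⁻ z in Ioi 0, ENNReal.ofReal (g z) ∂ν := hstep6
  have hfinal := (ENNReal.ofReal_le_iff_le_toReal hfin).1 hchain
  exact hfinal
end

section
/- For the Szász–Mirakyan (Poisson) operator S_n[f](x) = e^{−nx} ∑_{k=0}^∞ (nx)^k/k! · f(k/n), one has S_n[f](x) = E[f(P_{nx}/n)] where P_{nx} is Poisson with mean nx; consequently, for f Hölder of order α ∈ (0,1] with constant H, |S_n[f](x) − f(x)| ≤ H (x/n)^{α/2} for all x ≥ 0. -/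
open Set MeasureTheory ProbabilityTheory Real


lemma hasSum_poisson_mean (r : NNReal) :
    HasSum (fun k : ℕ => poissonPMFReal r k * k) (r : ℝ) := by
  have h1 : HasSum (fun j : ℕ => poissonPMFReal r (j + 1) * ((j : ℝ) + 1)) (r : ℝ) := by
    have h := (poissonPMFRealSum r).mul_left (r : ℝ)
    rw [mul_one] at h
    convert h using 2 with j
    rfl
    unfold poissonPMFReal
    rw [Nat.factorial_succ]
    have hj : ((j.factorial : ℝ)) ≠ 0 := by positivity
    push_cast
    field_simp
    ring
  have h2 := (hasSum_nat_add_iff (f := fun k : ℕ => poissonPMFReal r k * k) 1).mp (by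
    convert h1 using 2 with j; rfl; push_cast; ring)
  simpa [Finset.sum_range_succ] using h2

lemma hasSum_poisson_fact2 (r : NNReal) :
    HasSum (fun k : ℕ => poissonPMFReal r k * ((k : ℝ) * ((k : ℝ) - 1))) ((r : ℝ) ^ 2) := by
  have h1 : HasSum (fun j : ℕ => poissonPMFReal r (j + 2) * (((j : ℝ) + 2) * ((j : ℝ) + 1)))
      ((r : ℝ) ^ 2) := by
    have h := (poissonPMFRealSum r).mul_left ((r : ℝ) ^ 2)
    rw [mul_one] at h
    convert h using 2 with j
    rfl
    unfold poissonPMFReal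
    rw [Nat.factorial_succ, Nat.factorial_succ]
    have hj : ((j.factorial : ℝ)) ≠ 0 := by positivity
    push_cast
    field_simp
    ring
  have h2 := (hasSum_nat_add_iff (f := fun k : ℕ => poissonPMFReal r k * ((k:ℝ) * ((k:ℝ) - 1))) 2).mp (by
    convert h1 using 2 with j; rfl; push_cast; ring)
  simpa [Finset.sum_range_succ] using h2

lemma hasSum_poisson_sq (r : NNReal) :
    HasSum (fun k : ℕ => poissonPMFReal r k * ((k : ℝ) - r) ^ 2) (r : ℝ) := by
  have key := ((hasSum_poisson_fact2 r).add ((hasSum_poisson_mean r).mul_left (1 - 2 * (r:ℝ)))).add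
    ((poissonPMFRealSum r).mul_left ((r : ℝ) ^ 2))
  convert key using 2 with k
  · simp only [poissonPMFReal]; ring
  · ring

/-- The Szász–Mirakyan operator `S_n[f](x) = e^{−nx} ∑_k (nx)^k/k! · f(k/n)` equals
`E[f(P_{nx}/n)]` for `P_{nx}` Poisson with mean `nx`; consequently for `f` Hölder of
order `α` with constant `H`, `|S_n[f](x) − f(x)| ≤ H (x/n)^{α/2}` for all `x ≥ 0`. -/
theorem szasz_operator_representation_and_bound
    (n : ℕ) (hn : 0 < n) (x : NNReal)
    (f : ℝ → ℝ) (hfc : Continuous f)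
    (Mf : ℝ) (hbdd : ∀ y : ℝ, 0 ≤ y → |f y| ≤ Mf)
    (H α : ℝ) (hH : 0 ≤ H) (hα0 : 0 < α) (hα1 : α ≤ 1)
    (hHolder : ∀ u v : ℝ, 0 ≤ u → 0 ≤ v → |f u - f v| ≤ H * |u - v| ^ α) :
    (Real.exp (-(n * x)) * ∑' k : ℕ, ((n * x : ℝ) ^ k / k.factorial) * f (k / n))
      = ∫ k, f ((k : ℝ) / n) ∂(poissonMeasure (n * x))
    ∧ |(Real.exp (-(n * x)) * ∑' k : ℕ, ((n * x : ℝ) ^ k / k.factorial) * f (k / n))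
          - f x|
        ≤ H * ((x : ℝ) / n) ^ (α / 2) := by
  set r : NNReal := (n : NNReal) * x with hr
  have hrr : (r : ℝ) = (n : ℝ) * x := by push_cast [hr]; ring
  set μ : Measure ℕ := poissonMeasure r with hμ
  haveI : IsProbabilityMeasure μ := inferInstanceAs (IsProbabilityMeasure (poissonMeasure r))
  have hnR : (0:ℝ) < n := by exact_mod_cast hn
  -- the function
  set g : ℕ → ℝ := fun k => f ((k : ℝ) / n) with hg
  have hgmeas : Measurable g := measurable_of_countable g
  have hgint : Integrable g μ := by
    refine Integrable.mono' (integrable_const Mf) hgmeas.aestronglyMeasurable ?_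
    filter_upwards with k
    rw [Real.norm_eq_abs]
    exact hbdd _ (by positivity)
  -- representation
  have hrep : (Real.exp (-(n * x)) * ∑' k : ℕ, ((n * x : ℝ) ^ k / k.factorial) * f (k / n))
      = ∫ k, g k ∂μ := by
    rw [hμ, integral_poissonMeasure' hgint]
    rw [← tsum_mul_left]
    congr 1 with k
    rw [smul_eq_mul]
    rw [hrr]
    ring
  refine ⟨hrep, ?_⟩
  rw [hrep]
  -- deviation function
  set Y : ℕ → ℝ := fun k => (k : ℝ) / n - x with hY
  have hYmeas : Measurable Y := measurable_of_countable Y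
  -- second moment series
  have hsq : HasSum (fun k => poissonPMFReal r k * (Y k) ^ 2) ((x : ℝ) / n) := by
    have h := (hasSum_poisson_sq r).mul_left ((1 : ℝ) / n ^ 2)
    have hval : (1 : ℝ) / n ^ 2 * r = (x : ℝ) / n := by
      rw [hrr]; field_simp
    rw [hval] at h
    have hfun : (fun k : ℕ => poissonPMFReal r k * (Y k) ^ 2)
        = fun k => (1:ℝ) / n ^ 2 * (poissonPMFReal r k * ((k:ℝ) - r) ^ 2) := by
      funext k
      rw [hY, hrr]
      field_simp
    rw [hfun]
    exact h
  -- lintegral of |Y|^2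
  have hlin2 : ∫⁻ k, (‖Y k‖₊ : ENNReal) ^ (2:ℝ) ∂μ = ENNReal.ofReal ((x : ℝ) / n) := by
    rw [lintegral_countable']
    have hterm : ∀ k : ℕ, (‖Y k‖₊ : ENNReal) ^ (2:ℝ) * μ {k}
        = ENNReal.ofReal (poissonPMFReal r k * (Y k) ^ 2) := by
      intro k
      have hμk : μ {k} = ENNReal.ofReal (poissonPMFReal r k) := by
        rw [hμ, poissonMeasure_singleton]
        rfl
      rw [hμk, ← enorm_eq_nnnorm, ← ofReal_norm, Real.norm_eq_abs,
        ENNReal.ofReal_rpow_of_nonneg (abs_nonneg _) (by norm_num),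
        ← ENNReal.ofReal_mul (Real.rpow_nonneg (abs_nonneg _) _)]
      congr 1
      rw [show ((2:ℝ)) = ((2:ℕ):ℝ) by norm_num, Real.rpow_natCast, sq_abs]
      ring
    simp_rw [hterm]
    rw [← ENNReal.ofReal_tsum_of_nonneg (fun k => mul_nonneg poissonPMFReal_nonneg (sq_nonneg _)) hsq.summable, hsq.tsum_eq]
  -- integrability of Y^2
  have hintY2 : Integrable (fun k => (Y k) ^ 2) μ := by
    refine ⟨(hYmeas.pow_const 2).aestronglyMeasurable, ?_⟩
    rw [hasFiniteIntegral_iff_norm]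
    have : ∀ k : ℕ, ENNReal.ofReal ‖(Y k) ^ 2‖ = (‖Y k‖₊ : ENNReal) ^ (2:ℝ) := by
      intro k
      rw [← enorm_eq_nnnorm, ← ofReal_norm, ENNReal.ofReal_rpow_of_nonneg (norm_nonneg _) (by norm_num)]
      congr 1
      rw [Real.norm_eq_abs, Real.norm_eq_abs, show ((2:ℝ)) = ((2:ℕ):ℝ) by norm_num,
        Real.rpow_natCast, sq_abs, abs_of_nonneg (sq_nonneg _)]
    simp_rw [this, hlin2]
    exact ENNReal.ofReal_lt_top
  -- integrability of |Y|^α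
  have hintYa : Integrable (fun k => |Y k| ^ α) μ := by
    have hb : Integrable (fun k => 1 + (Y k) ^ 2) μ := by
      simpa using (integrable_const (1:ℝ)).add hintY2
    refine Integrable.mono' hb ((hYmeas.abs.pow_const α).aestronglyMeasurable) ?_
    filter_upwards with k
    rw [Real.norm_eq_abs, abs_of_nonneg (Real.rpow_nonneg (abs_nonneg _) _)]
    rcases le_or_gt (|Y k|) 1 with h | h
    · have := Real.rpow_le_one (abs_nonneg _) h hα0.le
      nlinarith [sq_nonneg (Y k)]
    · have h1 : |Y k| ^ α ≤ |Y k| ^ (2:ℝ) :=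
        Real.rpow_le_rpow_of_exponent_le h.le (by linarith)
      have h2 : |Y k| ^ (2:ℝ) = (Y k) ^ 2 := by
        rw [show ((2:ℝ)) = ((2:ℕ):ℝ) by norm_num, Real.rpow_natCast, sq_abs]
      nlinarith
  -- Lyapunov: E|Y|^α ≤ (E Y²)^{α/2}
  have hacc : ∫ k, |Y k| ^ α ∂μ ≤ ((x : ℝ) / n) ^ (α / 2) := by
    have hmono := eLpNorm_le_eLpNorm_of_exponent_le
      (show ENNReal.ofReal α ≤ (2 : ENNReal) by
        calc ENNReal.ofReal α ≤ ENNReal.ofReal 1 := ENNReal.ofReal_le_ofReal hα1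
        _ ≤ 2 := by norm_num)
      (μ := μ) hYmeas.aestronglyMeasurable
    rw [eLpNorm_eq_lintegral_rpow_enorm_toReal (by simpa using hα0) ENNReal.ofReal_ne_top,
      eLpNorm_eq_lintegral_rpow_enorm_toReal (by norm_num) (by norm_num)] at hmono
    rw [ENNReal.toReal_ofReal hα0.le] at hmono
    have h2r : ((2:ENNReal)).toReal = (2:ℝ) := by norm_num
    simp only [enorm_eq_nnnorm] at hmono
    rw [h2r, hlin2] at hmono
    -- raise to the power α
    have hA : ∫⁻ k, (‖Y k‖₊ : ENNReal) ^ α ∂μ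
        ≤ ENNReal.ofReal ((x : ℝ) / n) ^ (α / 2) := by
      have := ENNReal.rpow_le_rpow hmono hα0.le
      rwa [← ENNReal.rpow_mul, ← ENNReal.rpow_mul, one_div_mul_cancel hα0.ne',
        ENNReal.rpow_one, show (1/2) * α = α/2 by ring] at this
    have heq : ∫ k, |Y k| ^ α ∂μ = (∫⁻ k, (‖Y k‖₊ : ENNReal) ^ α ∂μ).toReal := by
      rw [integral_eq_lintegral_of_nonneg_ae
        (Filter.Eventually.of_forall fun k => Real.rpow_nonneg (abs_nonneg _) _)
        ((hYmeas.abs.pow_const α).aestronglyMeasurable)]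
      refine congrArg ENNReal.toReal (lintegral_congr fun k => ?_)
      rw [← enorm_eq_nnnorm, ← ofReal_norm, Real.norm_eq_abs,
        ENNReal.ofReal_rpow_of_nonneg (abs_nonneg _) hα0.le]
    rw [heq]
    calc (∫⁻ k, (‖Y k‖₊ : ENNReal) ^ α ∂μ).toReal
        ≤ (ENNReal.ofReal ((x : ℝ) / n) ^ (α / 2)).toReal :=
          ENNReal.toReal_mono (ENNReal.rpow_ne_top_of_nonneg (by positivity)
            ENNReal.ofReal_ne_top) hA
      _ = ((x : ℝ) / n) ^ (α / 2) := by
          rw [← ENNReal.toReal_rpow, ENNReal.toReal_ofReal (by positivity)]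
  -- final chain
  have hfxint : Integrable (fun _ : ℕ => f x) μ := integrable_const _
  calc |∫ k, g k ∂μ - f x|
      = |∫ k, (g k - f x) ∂μ| := by
        rw [integral_sub hgint hfxint, integral_const, probReal_univ]; simp
    _ ≤ ∫ k, |g k - f x| ∂μ := by
        simpa [Real.norm_eq_abs] using norm_integral_le_integral_norm (fun k => g k - f x) (μ := μ)
    _ ≤ ∫ k, H * |Y k| ^ α ∂μ := by
        refine integral_mono_of_nonneg (Filter.Eventually.of_forall fun k => abs_nonneg _)
          (hintYa.const_mul H) (Filter.Eventually.of_forall fun k => ?_)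
        exact hHolder _ _ (by positivity) x.coe_nonneg
    _ = H * ∫ k, |Y k| ^ α ∂μ := integral_const_mul H _
    _ ≤ H * ((x : ℝ) / n) ^ (α / 2) := mul_le_mul_of_nonneg_left hacc hH
end
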